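/- Let 1 ≤ p < ∞. There exist constants c, C > 0, depending only on p, such that for every real sequence x = (x_n)_{n≥1}: c · (∑_{j=0}^∞ 2^{j} (sup_{n∈Δ_j} |x_n|)^p)^{1/p} ≤ ‖x‖_{τℓ_p} ≤ C · (∑_{j=0}^∞ 2^{j} (sup_{n∈Δ_j} |x_n|)^p)^{1/p}, as an inequality of values in [0,∞]. -/

import Mathlib

open ENNReal

/-- The Tandori norm `‖x‖_{τℓ_p} = (∑_{n=1}^∞ (sup_{k≥n} |x_k|)^p)^{1/p}`
of a real sequence (indexed so that the entries of the sequence are `x 1, x 2, …`). -/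
noncomputable def tlNorm (p : ℝ) (x : ℕ → ℝ) : ℝ≥0∞ :=
  (∑' n : ℕ, (⨆ (k : ℕ) (_ : n + 1 ≤ k), ENNReal.ofReal |x k|) ^ p) ^ (1 / p)

/-- The block form expression
`(∑_{j=0}^∞ 2^j (sup_{n ∈ Δ_j} |x_n|)^p)^{1/p}`, where `Δ_j = {n : 2^j ≤ n < 2^{j+1}}`. -/
noncomputable def tlBlock (p : ℝ) (x : ℕ → ℝ) : ℝ≥0∞ :=
  (∑' j : ℕ, (2 : ℝ≥0∞) ^ (j : ℝ) *
      (⨆ n ∈ Finset.Ico (2 ^ j) (2 ^ (j + 1)), ENNReal.ofReal |x n|) ^ p) ^ (1 / p)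

private lemma myGeomLe (i : ℕ) : ∑ j ∈ Finset.range (i + 1), (2 : ℝ≥0∞) ^ j ≤ 2 ^ (i + 1) := by
  induction i with
  | zero => norm_num
  | succ i ih =>
    rw [Finset.sum_range_succ]
    calc ∑ j ∈ Finset.range (i + 1), (2 : ℝ≥0∞) ^ j + 2 ^ (i + 1)
        ≤ (2 : ℝ≥0∞) ^ (i + 1) + 2 ^ (i + 1) := add_le_add_left ih _
      _ = 2 ^ (i + 2) := by ring

private lemma log_mem_iff (n j : ℕ) :
    Nat.log 2 (n + 1) = j ↔ n ∈ Finset.Ico (2 ^ j - 1) (2 ^ (j + 1) - 1) := by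
  rw [Finset.mem_Ico]
  constructor
  · rintro rfl
    have h1 : 2 ^ Nat.log 2 (n + 1) ≤ n + 1 := Nat.pow_log_le_self 2 (Nat.succ_ne_zero n)
    have h2 : n + 1 < 2 ^ (Nat.log 2 (n + 1) + 1) := Nat.lt_pow_succ_log_self one_lt_two (n + 1)
    omega
  · rintro ⟨h1, h2⟩
    have h3 : 1 ≤ 2 ^ j := Nat.one_le_two_pow
    exact Nat.log_eq_of_pow_le_of_lt_pow (by omega) (by omega)

private lemma tsum_log (h : ℕ → ℝ≥0∞) :
    ∑' n : ℕ, h (Nat.log 2 (n + 1)) = ∑' j : ℕ, (2 : ℝ≥0∞) ^ j * h j := by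
  have step1 : ∀ n : ℕ, h (Nat.log 2 (n + 1))
      = ∑' j : ℕ, (if j = Nat.log 2 (n + 1) then h j else 0) := by
    intro n
    rw [tsum_eq_single (Nat.log 2 (n + 1)) (fun j hj => if_neg hj)]
    simp
  calc ∑' n, h (Nat.log 2 (n + 1))
      = ∑' n, ∑' j, (if j = Nat.log 2 (n + 1) then h j else 0) := tsum_congr step1
    _ = ∑' j, ∑' n, (if j = Nat.log 2 (n + 1) then h j else 0) := ENNReal.tsum_comm
    _ = ∑' j, (2 : ℝ≥0∞) ^ j * h j := by
        refine tsum_congr fun j => ?_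
        rw [tsum_eq_sum (s := Finset.Ico (2 ^ j - 1) (2 ^ (j + 1) - 1))
          (fun n hn => if_neg (fun e => hn ((log_mem_iff n j).mp e.symm)))]
        rw [Finset.sum_congr rfl (fun n hn => if_pos ((log_mem_iff n j).mpr hn).symm)]
        rw [Finset.sum_const, Nat.card_Ico]
        have h3 : 1 ≤ 2 ^ j := Nat.one_le_two_pow
        have h4 : 2 ^ (j + 1) = 2 ^ j * 2 := pow_succ 2 j
        have h5 : 2 ^ (j + 1) - 1 - (2 ^ j - 1) = 2 ^ j := by omega
        rw [h5, nsmul_eq_mul]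
        push_cast
        ring

/-- Block form representation of the Tandori sequence space built on `ℓ_p`. -/
theorem stmt_2 (p : ℝ) (hp : 1 ≤ p) :
    ∃ c C : ℝ, 0 < c ∧ 0 < C ∧ ∀ x : ℕ → ℝ,
      ENNReal.ofReal c * tlBlock p x ≤ tlNorm p x ∧
        tlNorm p x ≤ ENNReal.ofReal C * tlBlock p x := by
  have hp0 : (0 : ℝ) < p := lt_of_lt_of_le one_pos hp
  have hip : (0 : ℝ) ≤ 1 / p := by positivity
  have hip1 : 1 / p ≤ 1 := by
    rw [div_le_one hp0]; exact hp
  refine ⟨1 / 3, 2, by norm_num, by norm_num, fun x => ?_⟩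
  set A : ℕ → ℝ≥0∞ := fun n => ⨆ (k : ℕ) (_ : n + 1 ≤ k), ENNReal.ofReal |x k| with hA
  set Bf : ℕ → ℝ≥0∞ :=
    fun j => ⨆ n ∈ Finset.Ico (2 ^ j) (2 ^ (j + 1)), ENNReal.ofReal |x n| with hB
  set S : ℕ → ℝ≥0∞ := fun j => ⨆ (k : ℕ) (_ : 2 ^ j ≤ k), ENNReal.ofReal |x k| with hS
  have hnorm : tlNorm p x = (∑' n, A n ^ p) ^ (1 / p) := rfl
  have hblock : tlBlock p x = (∑' j, (2 : ℝ≥0∞) ^ j * Bf j ^ p) ^ (1 / p) := by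
    simp only [tlBlock, ENNReal.rpow_natCast, hB]
  set SA : ℝ≥0∞ := ∑' n, A n ^ p with hSA
  set T : ℝ≥0∞ := ∑' j, (2 : ℝ≥0∞) ^ j * Bf j ^ p with hT
  -- pointwise comparisons
  have hAS : ∀ n : ℕ, A n ≤ S (Nat.log 2 (n + 1)) := by
    intro n
    refine iSup₂_le fun k hk => ?_
    have h1 : 2 ^ Nat.log 2 (n + 1) ≤ n + 1 := Nat.pow_log_le_self 2 (Nat.succ_ne_zero n)
    exact le_iSup₂ (f := fun k (_ : 2 ^ Nat.log 2 (n + 1) ≤ k) => ENNReal.ofReal |x k|) k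
      (le_trans h1 hk)
  have hSA : ∀ n : ℕ, S (Nat.log 2 (n + 1) + 1) ≤ A n := by
    intro n
    refine iSup₂_le fun k hk => ?_
    have h2 : n + 1 < 2 ^ (Nat.log 2 (n + 1) + 1) := Nat.lt_pow_succ_log_self one_lt_two (n + 1)
    exact le_iSup₂ (f := fun k (_ : n + 1 ≤ k) => ENNReal.ofReal |x k|) k (by omega)
  have hBS : ∀ j : ℕ, Bf j ≤ S j := by
    intro j
    refine iSup₂_le fun n hn => ?_
    have h1 : 2 ^ j ≤ n := (Finset.mem_Ico.mp hn).1
    exact le_iSup₂ (f := fun k (_ : 2 ^ j ≤ k) => ENNReal.ofReal |x k|) n h1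
  have hS0A : S 0 ≤ A 0 := by
    refine iSup₂_le fun k hk => ?_
    exact le_iSup₂ (f := fun k (_ : 0 + 1 ≤ k) => ENNReal.ofReal |x k|) k (by simpa using hk)
  -- S j ^ p ≤ tail sum of Bf i ^ p
  have hSsum : ∀ j : ℕ, S j ^ p ≤ ∑' i : ℕ, (if j ≤ i then Bf i ^ p else 0) := by
    intro j
    have hle : S j ≤ (∑' i : ℕ, (if j ≤ i then Bf i ^ p else 0)) ^ (1 / p) := by
      refine iSup₂_le fun k hk => ?_
      have hk1 : k ≠ 0 := by
        have : 1 ≤ 2 ^ j := Nat.one_le_two_pow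
        omega
      set i := Nat.log 2 k with hi
      have h1 : 2 ^ i ≤ k := Nat.pow_log_le_self 2 hk1
      have h2 : k < 2 ^ (i + 1) := Nat.lt_pow_succ_log_self one_lt_two k
      have hji : j ≤ i := by
        by_contra hc
        push_neg at hc
        have : 2 ^ (i + 1) ≤ 2 ^ j := Nat.pow_le_pow_right (by norm_num) hc
        omega
      have hxB : ENNReal.ofReal |x k| ≤ Bf i := by
        exact le_iSup₂ (f := fun n (_ : n ∈ Finset.Ico (2 ^ i) (2 ^ (i + 1))) =>
          ENNReal.ofReal |x n|) k (Finset.mem_Ico.mpr ⟨h1, h2⟩)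
      have hBsum : Bf i ^ p ≤ ∑' i' : ℕ, (if j ≤ i' then Bf i' ^ p else 0) := by
        have := ENNReal.le_tsum (f := fun i' : ℕ => (if j ≤ i' then Bf i' ^ p else 0)) i
        simpa [if_pos hji] using this
      calc ENNReal.ofReal |x k| ≤ Bf i := hxB
        _ = (Bf i ^ p) ^ (1 / p) := by
            rw [← ENNReal.rpow_mul, mul_one_div, div_self hp0.ne', ENNReal.rpow_one]
        _ ≤ (∑' i' : ℕ, (if j ≤ i' then Bf i' ^ p else 0)) ^ (1 / p) :=
            ENNReal.rpow_le_rpow hBsum hip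
    calc S j ^ p ≤ ((∑' i : ℕ, (if j ≤ i then Bf i ^ p else 0)) ^ (1 / p)) ^ p :=
          ENNReal.rpow_le_rpow hle hp0.le
      _ = ∑' i : ℕ, (if j ≤ i then Bf i ^ p else 0) := by
          rw [← ENNReal.rpow_mul, one_div, inv_mul_cancel₀ hp0.ne', ENNReal.rpow_one]
  -- upper bound: SA ≤ 2 * T
  have hupper : SA ≤ 2 * T := by
    calc SA ≤ ∑' n, S (Nat.log 2 (n + 1)) ^ p :=
          ENNReal.tsum_le_tsum fun n => ENNReal.rpow_le_rpow (hAS n) hp0.le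
      _ = ∑' j, (2 : ℝ≥0∞) ^ j * S j ^ p := tsum_log fun j => S j ^ p
      _ ≤ ∑' j, (2 : ℝ≥0∞) ^ j * ∑' i : ℕ, (if j ≤ i then Bf i ^ p else 0) :=
          ENNReal.tsum_le_tsum fun j => mul_le_mul_right (hSsum j) _
      _ = ∑' j, ∑' i : ℕ, (if j ≤ i then (2 : ℝ≥0∞) ^ j * Bf i ^ p else 0) := by
          refine tsum_congr fun j => ?_
          rw [← ENNReal.tsum_mul_left]
          exact tsum_congr fun i => by split <;> simp
      _ = ∑' i, ∑' j : ℕ, (if j ≤ i then (2 : ℝ≥0∞) ^ j * Bf i ^ p else 0) := ENNReal.tsum_comm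
      _ ≤ ∑' i, 2 * ((2 : ℝ≥0∞) ^ i * Bf i ^ p) := by
          refine ENNReal.tsum_le_tsum fun i => ?_
          rw [tsum_eq_sum (s := Finset.range (i + 1))
            (fun j hj => if_neg (fun hc => hj (Finset.mem_range.mpr (by omega))))]
          rw [Finset.sum_congr rfl (fun j hj => if_pos (by
            have := Finset.mem_range.mp hj; omega))]
          rw [← Finset.sum_mul]
          calc (∑ j ∈ Finset.range (i + 1), (2 : ℝ≥0∞) ^ j) * Bf i ^ p
              ≤ (2 : ℝ≥0∞) ^ (i + 1) * Bf i ^ p := mul_le_mul_left (myGeomLe i) _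
            _ = 2 * ((2 : ℝ≥0∞) ^ i * Bf i ^ p) := by ring
      _ = 2 * T := ENNReal.tsum_mul_left
  -- lower bound: T ≤ 3 * SA
  have hA0 : A 0 ^ p ≤ SA := ENNReal.le_tsum 0
  have hlower : T ≤ 3 * SA := by
    have hsplit : T = (2 : ℝ≥0∞) ^ (0 : ℕ) * Bf 0 ^ p +
        ∑' i, (2 : ℝ≥0∞) ^ (i + 1) * Bf (i + 1) ^ p :=
      tsum_eq_zero_add' ENNReal.summable
    have h1 : (2 : ℝ≥0∞) ^ (0 : ℕ) * Bf 0 ^ p ≤ SA := by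
      simpa using le_trans (ENNReal.rpow_le_rpow (le_trans (hBS 0) hS0A) hp0.le) hA0
    have h2 : ∑' i, (2 : ℝ≥0∞) ^ (i + 1) * Bf (i + 1) ^ p ≤ 2 * SA := by
      calc ∑' i, (2 : ℝ≥0∞) ^ (i + 1) * Bf (i + 1) ^ p
          ≤ ∑' i, (2 : ℝ≥0∞) ^ (i + 1) * S (i + 1) ^ p :=
            ENNReal.tsum_le_tsum fun i =>
              mul_le_mul_right (ENNReal.rpow_le_rpow (hBS (i + 1)) hp0.le) _
        _ = ∑' i, 2 * ((2 : ℝ≥0∞) ^ i * S (i + 1) ^ p) := by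
            refine tsum_congr fun i => ?_; ring
        _ = 2 * ∑' i, (2 : ℝ≥0∞) ^ i * S (i + 1) ^ p := ENNReal.tsum_mul_left
        _ = 2 * ∑' n, S (Nat.log 2 (n + 1) + 1) ^ p := by
            rw [tsum_log fun j => S (j + 1) ^ p]
        _ ≤ 2 * SA := by
            refine mul_le_mul_right (ENNReal.tsum_le_tsum fun n => ?_) _
            exact ENNReal.rpow_le_rpow (hSA n) hp0.le
    calc T = _ := hsplit
      _ ≤ SA + 2 * SA := add_le_add h1 h2
      _ = 3 * SA := by ring
  constructor
  · -- lower bound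
    have hb3 : tlBlock p x ≤ 3 * tlNorm p x := by
      rw [hblock, hnorm]
      calc T ^ (1 / p) ≤ (3 * SA) ^ (1 / p) := ENNReal.rpow_le_rpow hlower hip
        _ = (3 : ℝ≥0∞) ^ (1 / p) * SA ^ (1 / p) := ENNReal.mul_rpow_of_nonneg _ _ hip
        _ ≤ 3 * SA ^ (1 / p) := by
            refine mul_le_mul_left ?_ _
            calc (3 : ℝ≥0∞) ^ (1 / p) ≤ (3 : ℝ≥0∞) ^ (1 : ℝ) :=
                ENNReal.rpow_le_rpow_of_exponent_le (by norm_num) hip1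
              _ = 3 := ENNReal.rpow_one 3
    calc ENNReal.ofReal (1 / 3) * tlBlock p x
        ≤ ENNReal.ofReal (1 / 3) * (3 * tlNorm p x) := mul_le_mul_right hb3 _
      _ = (ENNReal.ofReal (1 / 3) * 3) * tlNorm p x := by ring
      _ = tlNorm p x := by
          rw [show (3 : ℝ≥0∞) = ENNReal.ofReal 3 by norm_num, ← ENNReal.ofReal_mul (by norm_num)]
          norm_num
  · -- upper bound
    rw [hblock, hnorm]
    calc SA ^ (1 / p) ≤ (2 * T) ^ (1 / p) := ENNReal.rpow_le_rpow hupper hip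
      _ = (2 : ℝ≥0∞) ^ (1 / p) * T ^ (1 / p) := ENNReal.mul_rpow_of_nonneg _ _ hip
      _ ≤ ENNReal.ofReal 2 * T ^ (1 / p) := by
          refine mul_le_mul_left ?_ _
          calc (2 : ℝ≥0∞) ^ (1 / p) ≤ (2 : ℝ≥0∞) ^ (1 : ℝ) :=
              ENNReal.rpow_le_rpow_of_exponent_le (by norm_num) hip1
            _ = 2 := ENNReal.rpow_one 2
            _ = ENNReal.ofReal 2 := by norm_num
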